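/- Let Π be an even-near-critical centrally symmetric allowable sequence of 2n points in noncentral general position with central signature (d₁,...,dₜ) and first crossing switch in the first move. Define δ₁ = 0, δ₂ = d₁+d₂, and δᵢ = d₁+2d₂+⋯+2d_{i-1}+dᵢ for i ≥ 3. Then the i-th crossing switch (reversing sᵢ) occurs in move δᵢ +1 counting from π_{δᵢ} to π_{δᵢ+1}; equivalently, between the i-th and (i+1)-th crossing switches there are exactly dᵢ + d_{i+1} - 1 permutations. -/

import Mathlib

/-- `σ` is obtained from `ρ` by reversing disjoint substrings of consecutive positions:
every position lies in an interval `[a,b]` of positions that gets reversed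
(a trivial interval `a = b` accounts for untouched positions).
Permutations send points to positions (`0`-indexed). -/
def IsIntervalReversalStep (N : ℕ) (ρ σ : Fin N ≃ Fin N) : Prop :=
  ∀ j : Fin N, ∃ a b : ℕ, a ≤ (j : ℕ) ∧ (j : ℕ) ≤ b ∧ b < N ∧
    ∀ p : Fin N, a ≤ ((ρ p : ℕ)) → ((ρ p : ℕ)) ≤ b → ((σ p : ℕ)) = a + b - ((ρ p : ℕ))

/-- An allowable sequence on `N` points: a doubly-infinite sequence of permutations
(point `p` occupies position `perm i p` in the `i`-th permutation), where
`perm (i + h)` is the reversal of `perm i`, consecutive permutations differ by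
simultaneous reversals of disjoint consecutive substrings, and every pair of points
switches (i.e. reverses its relative order) exactly once per halfperiod. -/
structure AllowableSeq (N : ℕ) where
  perm : ℤ → (Fin N ≃ Fin N)
  h : ℕ
  h_pos : 0 < h
  reversal : ∀ (i : ℤ) (p : Fin N), ((perm (i + h)) p : ℕ) = N - 1 - ((perm i) p : ℕ)
  step : ∀ i : ℤ, IsIntervalReversalStep N (perm (i - 1)) (perm i)
  flip_once : ∀ p q : Fin N, p ≠ q →
    ∃! i : ℤ, i ∈ Finset.Icc 1 (h : ℤ) ∧
      ¬ (((perm (i - 1)) p < (perm (i - 1)) q) ↔ ((perm i) p < (perm i) q))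

/-- The pair of points `p, q` switches (participates in a common switch) in the
`i`-th move, i.e. their relative order is reversed from `perm (i-1)` to `perm i`. -/
def Flips {N : ℕ} (A : AllowableSeq N) (i : ℤ) (p q : Fin N) : Prop :=
  ¬ (((A.perm (i - 1)) p < (A.perm (i - 1)) q) ↔ ((A.perm i) p < (A.perm i) q))

/-- `A` is centrally symmetric with conjugation `conj`: the positions of a point and
its conjugate always sum to `N - 1` (i.e. `2n + 1` with `1`-indexed positions). -/
def CentSym {N : ℕ} (A : AllowableSeq N) (conj : Fin N → Fin N) : Prop :=
  ∀ (i : ℤ) (p : Fin N), ((A.perm i) p : ℕ) + ((A.perm i) (conj p) : ℕ) = N - 1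

/-- The `i`-th move of `A` (an allowable sequence on `2n` points) contains a crossing
switch reversing a centered substring of `2d` points, occupying positions
`n - d, …, n + d - 1`; maximality of the reversed centered substring is required. -/
def CrossingAt (n : ℕ) (A : AllowableSeq (2 * n)) (i : ℤ) (d : ℕ) : Prop :=
  1 ≤ d ∧ d ≤ n ∧
  (∀ p : Fin (2 * n), n - d ≤ ((A.perm (i - 1)) p : ℕ) → ((A.perm (i - 1)) p : ℕ) < n + d →
      ((A.perm i) p : ℕ) = 2 * n - 1 - ((A.perm (i - 1)) p : ℕ)) ∧
  (d = n ∨ ∀ p : Fin (2 * n), ((A.perm (i - 1)) p : ℕ) = n - d - 1 →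
      ((A.perm i) p : ℕ) ≠ n + d)

/-- `A` has central signature `(d 0, …, d (t-1))`, witnessed by the strictly increasing
sequence `m 0 < ⋯ < m (t-1)` of moves of the halfperiod `1, …, 2n` containing the
crossing switches, the `i`-th reversing `2 * d i` points; no other move contains a
crossing switch. -/
def HasCentralSignature (n t : ℕ) (A : AllowableSeq (2 * n)) (d : Fin t → ℕ)
    (m : Fin t → ℤ) : Prop :=
  StrictMono m ∧ (∀ i, m i ∈ Finset.Icc (1 : ℤ) (2 * n)) ∧
  (∀ i, CrossingAt n A (m i) (d i)) ∧
  (∀ j : ℤ, j ∈ Finset.Icc (1 : ℤ) (2 * n) → (∀ i, j ≠ m i) → ∀ e, ¬ CrossingAt n A j e)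

/-- `A` is in noncentral general position: every switch other than a crossing switch is
a transposition, i.e. every point that moves in a move either moves by exactly one
position or takes part in the crossing switch of that move. -/
def NoncentralGenPos (n : ℕ) (A : AllowableSeq (2 * n)) : Prop :=
  ∀ (i : ℤ) (p : Fin (2 * n)), ((A.perm i) p : ℕ) ≠ ((A.perm (i - 1)) p : ℕ) →
    (((A.perm i) p : ℕ) + 1 = ((A.perm (i - 1)) p : ℕ) ∨
      ((A.perm (i - 1)) p : ℕ) + 1 = ((A.perm i) p : ℕ)) ∨
    ∃ e, CrossingAt n A i e ∧ n - e ≤ ((A.perm (i - 1)) p : ℕ) ∧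
      ((A.perm (i - 1)) p : ℕ) < n + e

section Aux

variable {n : ℕ} {A : AllowableSeq (2*n)} {conj : Fin (2*n) → Fin (2*n)}

lemma apos_lt (A : AllowableSeq (2*n)) (i : ℤ) (p : Fin (2*n)) :
    ((A.perm i) p : ℕ) < 2*n := ((A.perm i) p).isLt

lemma aperm_inj (A : AllowableSeq (2*n)) (i : ℤ) {p q : Fin (2*n)}
    (h : ((A.perm i) p : ℕ) = ((A.perm i) q : ℕ)) : p = q :=
  (A.perm i).injective (Fin.ext h)

lemma aperm_surj (A : AllowableSeq (2*n)) (i : ℤ) (x : ℕ) (hx : x < 2*n) :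
    ∃ p, ((A.perm i) p : ℕ) = x := ⟨(A.perm i).symm ⟨x, hx⟩, by simp⟩

lemma conj_pos (hcs : CentSym A conj) (i : ℤ) (p : Fin (2*n)) :
    ((A.perm i) (conj p) : ℕ) = 2*n - 1 - ((A.perm i) p : ℕ) := by
  have := hcs i p
  have h1 := apos_lt A i p
  have h2 := apos_lt A i (conj p)
  omega

lemma conj_ne (hn : 0 < n) (hcs : CentSym A conj) (p : Fin (2*n)) : conj p ≠ p := by
  intro h
  have := hcs 0 p
  rw [h] at this
  omega

lemma conj_conj (hcs : CentSym A conj) (p : Fin (2*n)) : conj (conj p) = p := by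
  apply aperm_inj A 0
  have h1 := conj_pos hcs 0 p
  have h2 := conj_pos hcs 0 (conj p)
  have h3 := apos_lt A 0 p
  have h4 := hcs 0 p
  omega

/-- uniqueness of crossing half-length -/
lemma cross_unique {i : ℤ} {e e' : ℕ} (hn : 0 < n)
    (h1 : CrossingAt n A i e) (h2 : CrossingAt n A i e') : e = e' := by
  have key : ∀ a b : ℕ, a < b → CrossingAt n A i a → CrossingAt n A i b → False := by
    intro a b hab ⟨ha1, han, hamain, hamax⟩ ⟨hb1, hbn, hbmain, hbmax⟩
    rcases hamax with h | hmax
    · omega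
    · obtain ⟨q, hq⟩ := aperm_surj A (i-1) (n - a - 1) (by omega)
      have hq2 : ((A.perm i) q : ℕ) = 2*n - 1 - ((A.perm (i-1)) q : ℕ) := by
        apply hbmain q <;> omega
      exact hmax q hq (by omega)
  rcases lt_trichotomy e e' with h | h | h
  · exact absurd (key e e' h h1 h2) not_false
  · exact h
  · exact absurd (key e' e h h2 h1) not_false

end Aux
section Aux2

variable {n : ℕ} {A : AllowableSeq (2*n)} {conj : Fin (2*n) → Fin (2*n)}

/-- a point moving from n-1 to n forces a crossing switch of half-length 1 -/
lemma crossing_one (hn : 0 < n) (hcs : CentSym A conj) (hgen : NoncentralGenPos n A)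
    {j : ℤ} {p : Fin (2*n)} (hp1 : ((A.perm (j-1)) p : ℕ) = n - 1)
    (hp2 : ((A.perm j) p : ℕ) = n) (hnc : ∀ e, ¬ CrossingAt n A j e) : False := by
  apply hnc 1
  refine ⟨le_refl 1, hn, ?_, ?_⟩
  · intro q hq1 hq2
    have hq : ((A.perm (j-1)) q : ℕ) = n - 1 ∨ ((A.perm (j-1)) q : ℕ) = n := by omega
    have hcp1 : ((A.perm (j-1)) (conj p) : ℕ) = n := by
      rw [conj_pos hcs]; omega
    have hcp2 : ((A.perm j) (conj p) : ℕ) = n - 1 := by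
      rw [conj_pos hcs]; omega
    rcases hq with h | h
    · have : q = p := aperm_inj A (j-1) (by omega)
      subst this; omega
    · have : q = conj p := aperm_inj A (j-1) (by omega)
      subst this; omega
  · by_cases h1 : (1:ℕ) = n
    · exact Or.inl h1
    · refine Or.inr fun q hq1 hq2 => ?_
      have hne : ((A.perm j) q : ℕ) ≠ ((A.perm (j-1)) q : ℕ) := by omega
      rcases hgen j q hne with h | ⟨e, he, _⟩
      · omega
      · exact hnc e he

/-- at a non-crossing move, every point moves by at most one and stays on its side -/
lemma nocross_step (hn : 0 < n) (hcs : CentSym A conj) (hgen : NoncentralGenPos n A)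
    {j : ℤ} (hnc : ∀ e, ¬ CrossingAt n A j e) (p : Fin (2*n)) :
    (((A.perm j) p : ℕ) ≤ ((A.perm (j-1)) p : ℕ) + 1 ∧
      ((A.perm (j-1)) p : ℕ) ≤ ((A.perm j) p : ℕ) + 1) ∧
    (((A.perm (j-1)) p : ℕ) < n ↔ ((A.perm j) p : ℕ) < n) := by
  have hsmall : ((A.perm j) p : ℕ) ≤ ((A.perm (j-1)) p : ℕ) + 1 ∧
      ((A.perm (j-1)) p : ℕ) ≤ ((A.perm j) p : ℕ) + 1 := by
    by_cases hne : ((A.perm j) p : ℕ) = ((A.perm (j-1)) p : ℕ)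
    · omega
    · rcases hgen j p hne with h | ⟨e, he, _⟩
      · omega
      · exact absurd he (hnc e)
  refine ⟨hsmall, ?_⟩
  constructor
  · intro hside
    by_contra hgt
    have h1 : ((A.perm (j-1)) p : ℕ) = n - 1 := by omega
    have h2 : ((A.perm j) p : ℕ) = n := by omega
    exact crossing_one hn hcs hgen h1 h2 hnc
  · intro hside
    by_contra hgt
    have h1 : ((A.perm (j-1)) p : ℕ) = n := by omega
    have h2 : ((A.perm j) p : ℕ) = n - 1 := by omega
    have hc1 : ((A.perm (j-1)) (conj p) : ℕ) = n - 1 := by rw [conj_pos hcs]; omega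
    have hc2 : ((A.perm j) (conj p) : ℕ) = n := by rw [conj_pos hcs]; omega
    exact crossing_one hn hcs hgen hc1 hc2 hnc

/-- flips of a conjugate pair correspond to side changes -/
lemma flips_iff_side (hn : 0 < n) (hcs : CentSym A conj) (i : ℤ) (p : Fin (2*n)) :
    Flips A i p (conj p) ↔
      ¬ (((A.perm (i-1)) p : ℕ) < n ↔ ((A.perm i) p : ℕ) < n) := by
  have h1 := hcs (i-1) p
  have h2 := hcs i p
  have b1 := apos_lt A (i-1) p
  have b2 := apos_lt A i p
  unfold Flips
  rw [Fin.lt_def, Fin.lt_def]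
  constructor <;> intro h <;> intro hh <;> apply h <;> omega

/-- membership in a crossing block implies a side change at that move -/
lemma block_side_change {i : ℤ} {e : ℕ} (hc : CrossingAt n A i e) {p : Fin (2*n)}
    (h1 : n - e ≤ ((A.perm (i-1)) p : ℕ)) (h2 : ((A.perm (i-1)) p : ℕ) < n + e) :
    ¬ (((A.perm (i-1)) p : ℕ) < n ↔ ((A.perm i) p : ℕ) < n) := by
  obtain ⟨he1, he2, hmain, _⟩ := hc
  have := hmain p h1 h2
  have := apos_lt A (i-1) p
  omega

/-- a side change at a crossing move implies block membership -/
lemma side_change_block (hn : 0 < n) (hgen : NoncentralGenPos n A) {i : ℤ} {e : ℕ}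
    (hc : CrossingAt n A i e) {p : Fin (2*n)}
    (hs : ¬ (((A.perm (i-1)) p : ℕ) < n ↔ ((A.perm i) p : ℕ) < n)) :
    n - e ≤ ((A.perm (i-1)) p : ℕ) ∧ ((A.perm (i-1)) p : ℕ) < n + e := by
  have he1 := hc.1
  have hne : ((A.perm i) p : ℕ) ≠ ((A.perm (i-1)) p : ℕ) := by omega
  rcases hgen i p hne with h | ⟨e', he', hb1, hb2⟩
  · omega
  · have : e' = e := cross_unique hn he' hc
    omega

end Aux2
section Aux3

variable {n : ℕ} {A : AllowableSeq (2*n)} {conj : Fin (2*n) → Fin (2*n)}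

lemma pos_period (henc : A.h = 2*n) (i : ℤ) (p : Fin (2*n)) :
    ((A.perm (i + 2*n)) p : ℕ) = 2*n - 1 - ((A.perm i) p : ℕ) := by
  have := A.reversal i p
  rw [henc] at this
  have hc2 : ((2*n : ℕ) : ℤ) = 2*(n:ℤ) := by push_cast; ring
  rw [hc2] at this
  exact this

lemma flips_period (hn : 0 < n) (henc : A.h = 2*n) (i : ℤ) (p q : Fin (2*n)) (hpq : p ≠ q) :
    Flips A (i + 2*n) p q ↔ Flips A i p q := by
  have e1 : (i + 2*n - 1 : ℤ) = (i - 1) + 2*n := by ring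
  have h1 := pos_period henc (i-1) p
  have h2 := pos_period henc (i-1) q
  have h3 := pos_period henc i p
  have h4 := pos_period henc i q
  have b1 := apos_lt A (i-1) p
  have b2 := apos_lt A (i-1) q
  have b3 := apos_lt A i p
  have b4 := apos_lt A i q
  have ne1 : ((A.perm (i-1)) p : ℕ) ≠ ((A.perm (i-1)) q : ℕ) :=
    fun h => hpq (aperm_inj A (i-1) h)
  have ne2 : ((A.perm i) p : ℕ) ≠ ((A.perm i) q : ℕ) :=
    fun h => hpq (aperm_inj A i h)
  unfold Flips
  rw [e1, Fin.lt_def, Fin.lt_def, Fin.lt_def, Fin.lt_def]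
  constructor <;> intro h <;> intro hh <;> apply h <;> omega

lemma cross_period (hn : 0 < n) (henc : A.h = 2*n) (hgen : NoncentralGenPos n A)
    {i : ℤ} {e : ℕ} (hc : CrossingAt n A i e) : CrossingAt n A (i + 2*n) e := by
  obtain ⟨he1, he2, hmain, hmax⟩ := id hc
  have e1 : (i + 2*n - 1 : ℤ) = (i - 1) + 2*n := by ring
  refine ⟨he1, he2, ?_, ?_⟩
  · intro p hp1 hp2
    rw [e1] at hp1 hp2 ⊢
    rw [pos_period henc (i-1) p] at hp1 hp2 ⊢
    rw [pos_period henc i p]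
    have b1 := apos_lt A (i-1) p
    have := hmain p (by omega) (by omega)
    omega
  · by_cases hen : e = n
    · exact Or.inl hen
    · refine Or.inr fun p hp1 hp2 => ?_
      rw [e1, pos_period henc (i-1) p] at hp1
      rw [pos_period henc i p] at hp2
      have b1 := apos_lt A (i-1) p
      have b2 := apos_lt A i p
      have hp1' : ((A.perm (i-1)) p : ℕ) = n + e := by omega
      have hp2' : ((A.perm i) p : ℕ) = n - e - 1 := by omega
      have hne : ((A.perm i) p : ℕ) ≠ ((A.perm (i-1)) p : ℕ) := by omega
      rcases hgen i p hne with h | ⟨e', he', hb1, hb2⟩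
      · omega
      · have : e' = e := cross_unique hn he' hc
        omega

end Aux3
section Aux4

variable {n : ℕ} {A : AllowableSeq (2*n)} {conj : Fin (2*n) → Fin (2*n)}

/-- The key gap lower bound between consecutive crossing switches. -/
lemma gap_bound (hn : 0 < n) (hcs : CentSym A conj) (hgen : NoncentralGenPos n A)
    {a b : ℕ} {M1 M2 : ℤ} (hM : M1 < M2)
    (hca : CrossingAt n A M1 a) (hcb : CrossingAt n A M2 b)
    (hwin : ∀ j : ℤ, M1 < j → j < M2 → ∀ e, ¬ CrossingAt n A j e)
    (hdisj : ∀ p : Fin (2*n), n ≤ ((A.perm (M1-1)) p : ℕ) →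
      ((A.perm (M1-1)) p : ℕ) < n + a →
      n - b ≤ ((A.perm (M2-1)) p : ℕ) → ((A.perm (M2-1)) p : ℕ) < n → False) :
    M1 + a + b ≤ M2 := by
  obtain ⟨ha1, han, hamain, _⟩ := id hca
  obtain ⟨hb1, hbn, hbmain, _⟩ := id hcb
  -- X invariant
  have Xinv : ∀ j : ℕ, ∀ p : Fin (2*n), M1 + (j:ℤ) ≤ M2 - 1 →
      n + j < ((A.perm (M1 + (j:ℤ))) p : ℕ) + a + 1 →
      ((A.perm (M1 + (j:ℤ))) p : ℕ) < n →
      n ≤ ((A.perm (M1-1)) p : ℕ) ∧ ((A.perm (M1-1)) p : ℕ) < n + a := by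
    intro j
    induction j with
    | zero =>
      intro p _ h1 h2
      simp only [Nat.cast_zero, add_zero] at h1 h2
      set x := ((A.perm M1) p : ℕ) with hx
      have hx2 : x < 2*n := apos_lt A M1 p
      obtain ⟨w, hw⟩ := aperm_surj A (M1-1) (2*n - 1 - x) (by omega)
      have hw2 : ((A.perm M1) w : ℕ) = 2*n - 1 - (2*n - 1 - x) := by
        rw [← hw]; exact hamain w (by omega) (by omega)
      have hwp : w = p := aperm_inj A M1 (by omega)
      subst hwp
      omega
    | succ j ih =>
      intro p hle h1 h2
      have hcast : (((j:ℕ)+1 : ℕ) : ℤ) = (j:ℤ) + 1 := by push_cast; ring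
      rw [hcast] at hle h1 h2
      have hjmove : M1 + ((j:ℤ)+1) - 1 = M1 + (j:ℤ) := by ring
      have hnc := hwin (M1 + ((j:ℤ)+1)) (by omega) (by omega)
      have hstep := nocross_step hn hcs hgen hnc p
      rw [hjmove] at hstep
      have hside := hstep.2.2 h2
      have hsm := hstep.1
      exact ih p (by omega) (by omega) hside
  -- Y invariant
  have Yinv : ∀ j : ℕ, ∀ p : Fin (2*n), M1 ≤ M2 - 1 - (j:ℤ) →
      n + j < ((A.perm (M2 - 1 - (j:ℤ))) p : ℕ) + b + 1 →
      ((A.perm (M2 - 1 - (j:ℤ))) p : ℕ) < n →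
      n - b ≤ ((A.perm (M2-1)) p : ℕ) ∧ ((A.perm (M2-1)) p : ℕ) < n := by
    intro j
    induction j with
    | zero =>
      intro p _ h1 h2
      simp only [Nat.cast_zero, sub_zero] at h1 h2
      omega
    | succ j ih =>
      intro p hle h1 h2
      have hcast : (((j:ℕ)+1 : ℕ) : ℤ) = (j:ℤ) + 1 := by push_cast; ring
      rw [hcast] at hle h1 h2
      have hjmove : M2 - 1 - (j:ℤ) - 1 = M2 - 1 - ((j:ℤ)+1) := by ring
      have hnc := hwin (M2 - 1 - (j:ℤ)) (by omega) (by omega)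
      have hstep := nocross_step hn hcs hgen hnc p
      rw [hjmove] at hstep
      have hside := (hstep.2).1 h2
      have hsm := hstep.1
      exact ih p (by omega) (by omega) hside
  -- main argument
  by_contra hcon
  push_neg at hcon
  by_cases hcase : M2 - 1 - M1 ≤ (a:ℤ) - 1
  · -- short window
    set j : ℕ := (M2 - 1 - M1).toNat with hj
    have hj2 : (j:ℤ) = M2 - 1 - M1 := Int.toNat_of_nonneg (by omega)
    obtain ⟨p, hp⟩ := aperm_surj A (M2-1) (n-1) (by omega)
    have he : M1 + (j:ℤ) = M2 - 1 := by omega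
    have hX := Xinv j p (by omega) (by rw [he, hp]; omega) (by rw [he, hp]; omega)
    exact hdisj p hX.1 hX.2 (by omega) (by omega)
  · -- long window
    have ha0 : ((a - 1 : ℕ) : ℤ) = (a:ℤ) - 1 := by omega
    obtain ⟨p, hp⟩ := aperm_surj A (M1 + ((a:ℤ)-1)) (n-1) (by omega)
    have hX := Xinv (a-1) p (by rw [ha0]; omega)
      (by rw [ha0, hp]; omega) (by rw [ha0, hp]; omega)
    set j' : ℕ := (M2 - M1 - a).toNat with hj'
    have hj2 : (j':ℤ) = M2 - M1 - a := Int.toNat_of_nonneg (by omega)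
    have he : M2 - 1 - (j':ℤ) = M1 + ((a:ℤ)-1) := by omega
    have hY := Yinv j' p (by omega) (by rw [he, hp]; omega) (by rw [he, hp]; omega)
    exact hdisj p hX.1 hX.2 hY.1 hY.2
end Aux4
section Aux5
open Finset

variable {n : ℕ} {A : AllowableSeq (2*n)} {conj : Fin (2*n) → Fin (2*n)}

/-- counting points in a window of positions -/
lemma card_window (A : AllowableSeq (2*n)) (i : ℤ) (lo hi : ℕ) (h : hi ≤ 2*n) :
    (univ.filter fun p : Fin (2*n) =>
      lo ≤ ((A.perm i) p : ℕ) ∧ ((A.perm i) p : ℕ) < hi).card = hi - lo := by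
  rw [← Nat.card_Ico lo hi]
  exact Finset.card_bij (fun p _ => ((A.perm i) p : ℕ))
    (fun p hp => by
      simp only [mem_filter] at hp
      simp only [mem_Ico]
      exact hp.2)
    (fun p1 h1 p2 h2 hh => aperm_inj A i hh)
    (fun x hx => by
      simp only [mem_Ico] at hx
      refine ⟨(A.perm i).symm ⟨x, by omega⟩, ?_, by simp⟩
      simp only [mem_filter, Equiv.apply_symm_apply]
      exact ⟨mem_univ _, hx.1, hx.2⟩)

lemma sum_d (hn : 0 < n) {t : ℕ} (ht : 0 < t) (hcs : CentSym A conj)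
    (henc : A.h = 2*n) (hgen : NoncentralGenPos n A)
    (d : Fin t → ℕ) (m : Fin t → ℤ) (hsig : HasCentralSignature n t A d m) :
    ∑ i : Fin t, d i = n := by
  obtain ⟨hmono, hicc, hcross, honly⟩ := hsig
  have hh : (A.h : ℤ) = 2*(n:ℤ) := by rw [henc]; push_cast; ring
  set G : Fin t → Finset (Fin (2*n)) := fun i => univ.filter fun p =>
    n - d i ≤ ((A.perm (m i - 1)) p : ℕ) ∧ ((A.perm (m i - 1)) p : ℕ) < n + d i with hG
  set F : Fin t → Finset (Fin (2*n)) := fun i => (G i).filter fun p =>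
    ((A.perm 0) p : ℕ) < n with hF
  -- cardinality of G
  have cardG : ∀ i, (G i).card = 2 * d i := by
    intro i
    have h1 := (hcross i).1
    have h2 := (hcross i).2.1
    simp only [hG]
    rw [card_window A (m i - 1) (n - d i) (n + d i) (by omega)]
    omega
  -- F and its conjugate partition G
  have cardF : ∀ i, (F i).card = d i := by
    intro i
    have h1 := (hcross i).1
    have h2 := (hcross i).2.1
    have key : (F i).card = ((G i).filter fun p => ¬ ((A.perm 0) p : ℕ) < n).card := by
      refine Finset.card_bij (fun p _ => conj p) ?_ ?_ ?_
      · intro p hp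
        simp only [hF, hG, mem_filter, mem_univ, true_and] at hp ⊢
        have c1 := conj_pos hcs (m i - 1) p
        have c2 := conj_pos hcs 0 p
        have b1 := apos_lt A (m i - 1) p
        have b2 := apos_lt A 0 p
        refine ⟨⟨?_, ?_⟩, ?_⟩ <;> omega
      · intro p1 h1 p2 h2 hh
        have := congrArg conj hh
        rwa [conj_conj hcs, conj_conj hcs] at this
      · intro q hq
        refine ⟨conj q, ?_, conj_conj hcs q⟩
        simp only [hF, hG, mem_filter, mem_univ, true_and] at hq ⊢
        have c1 := conj_pos hcs (m i - 1) q
        have c2 := conj_pos hcs 0 q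
        have b1 := apos_lt A (m i - 1) q
        have b2 := apos_lt A 0 q
        refine ⟨⟨?_, ?_⟩, ?_⟩ <;> omega
    have hsplit : (F i).card + ((G i).filter fun p => ¬ ((A.perm 0) p : ℕ) < n).card
        = (G i).card :=
      Finset.card_filter_add_card_filter_not (fun p => ((A.perm 0) p : ℕ) < n)
    rw [cardG] at hsplit
    omega
  -- membership characterization
  have memF : ∀ (i : Fin t) (p : Fin (2*n)), p ∈ F i ↔
      (((A.perm 0) p : ℕ) < n ∧ n - d i ≤ ((A.perm (m i - 1)) p : ℕ) ∧
        ((A.perm (m i - 1)) p : ℕ) < n + d i) := by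
    intro i p
    simp only [hF, hG, mem_filter, mem_univ, true_and]
    tauto
  have flipsF : ∀ (i : Fin t) (p : Fin (2*n)), p ∈ F i → Flips A (m i) p (conj p) := by
    intro i p hp
    rw [memF] at hp
    rw [flips_iff_side hn hcs]
    exact block_side_change (hcross i) hp.2.1 hp.2.2
  have hdisjF : ∀ i ∈ (univ : Finset (Fin t)), ∀ j ∈ (univ : Finset (Fin t)),
      i ≠ j → Disjoint (F i) (F j) := by
    intro i _ j _ hij
    rw [Finset.disjoint_left]
    intro p hpi hpj
    have f1 := flipsF i p hpi
    have f2 := flipsF j p hpj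
    have hne : p ≠ conj p := (conj_ne hn hcs p).symm
    obtain ⟨i0, _, huniq⟩ := A.flip_once p (conj p) hne
    have e1 : m i = i0 := huniq (m i) ⟨by rw [hh]; exact hicc i, f1⟩
    have e2 : m j = i0 := huniq (m j) ⟨by rw [hh]; exact hicc j, f2⟩
    exact hij (hmono.injective (e1.trans e2.symm))
  have hcover : (univ : Finset (Fin t)).biUnion F =
      univ.filter fun p : Fin (2*n) => 0 ≤ ((A.perm 0) p : ℕ) ∧ ((A.perm 0) p : ℕ) < n := by
    ext p
    simp only [mem_biUnion, mem_univ, true_and, mem_filter]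
    constructor
    · rintro ⟨i, hi⟩
      rw [memF] at hi
      exact ⟨Nat.zero_le _, hi.1⟩
    · rintro ⟨-, hp⟩
      have hne : p ≠ conj p := (conj_ne hn hcs p).symm
      obtain ⟨i0, ⟨hi0m, hi0f⟩, huniq⟩ := A.flip_once p (conj p) hne
      have hi0f' : Flips A i0 p (conj p) := hi0f
      have hex : ∃ k : Fin t, i0 = m k := by
        by_contra hno
        push_neg at hno
        have hnc := honly i0 (by rw [hh] at hi0m; exact hi0m) hno
        rw [flips_iff_side hn hcs] at hi0f'
        exact hi0f' ((nocross_step hn hcs hgen hnc p).2)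
      obtain ⟨k, hk⟩ := hex
      refine ⟨k, ?_⟩
      rw [memF]
      rw [hk] at hi0f'
      rw [flips_iff_side hn hcs] at hi0f'
      exact ⟨hp, side_change_block hn hgen (hcross k) hi0f'⟩
  have hsum : ∑ i : Fin t, (F i).card = n := by
    rw [← Finset.card_biUnion hdisjF, hcover,
      card_window A 0 0 n (by omega)]
    omega
  rw [← hsum]
  exact Finset.sum_congr rfl fun i _ => (cardF i).symm
end Aux5

section Aux6
open Finset

variable {n : ℕ} {A : AllowableSeq (2*n)} {conj : Fin (2*n) → Fin (2*n)}

lemma block_flips (hn : 0 < n) (hcs : CentSym A conj) {i : ℤ} {e : ℕ} {p : Fin (2*n)}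
    (hc : CrossingAt n A i e) (h1 : n - e ≤ ((A.perm (i-1)) p : ℕ))
    (h2 : ((A.perm (i-1)) p : ℕ) < n + e) : Flips A i p (conj p) := by
  rw [flips_iff_side hn hcs]
  exact block_side_change hc h1 h2

end Aux6


/-- In an even-near-critical centrally symmetric allowable sequence of `2n` points in
noncentral general position with central signature `(d 0, …, d (t-1))` and first
crossing switch in the first move, the `i`-th crossing switch occurs in move `δ i + 1`
(taking `π_{δ i}` to `π_{δ i + 1}`), where `δ 0 = 0` and
`δ i = d 0 + 2 (d 1 + ⋯ + d (i-1)) + d i` for `i ≥ 1`; equivalently, consecutive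
crossing switches are separated by exactly `d i + d (i+1) - 1` permutations. -/
theorem stmt_12 (n t : ℕ) (hn : 0 < n) (ht : 0 < t) (A : AllowableSeq (2 * n))
    (conj : Fin (2 * n) → Fin (2 * n)) (hcs : CentSym A conj)
    (henc : A.h = 2 * n) (hgen : NoncentralGenPos n A)
    (d : Fin t → ℕ) (m : Fin t → ℤ) (hsig : HasCentralSignature n t A d m)
    (hfirst : m ⟨0, ht⟩ = 1) :
    (∀ i : Fin t, m i =
      (if (i : ℕ) = 0 then 0 else
        (d ⟨0, ht⟩ : ℤ) + 2 * (∑ j ∈ Finset.Ioo (⟨0, ht⟩ : Fin t) i, (d j : ℤ)) + d i) + 1) ∧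
    (∀ i j : Fin t, (i : ℕ) + 1 = (j : ℕ) → m j - m i = d i + d j) := by
  set z : Fin t := ⟨0, ht⟩ with hz
  have hzv : (z:ℕ) = 0 := rfl
  set C : Fin t → ℤ := fun i => (if (i : ℕ) = 0 then 0 else
    (d z : ℤ) + 2 * (∑ j ∈ Finset.Ioo z i, (d j : ℤ)) + d i) with hC
  have hdsum : ∑ i : Fin t, (d i : ℤ) = (n : ℤ) := by
    exact_mod_cast congrArg (Nat.cast : ℕ → ℤ) (sum_d hn ht hcs henc hgen d m hsig)
  obtain ⟨hmono, hicc, hcross, honly⟩ := hsig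
  have hh : (A.h : ℤ) = 2*(n:ℤ) := by rw [henc]; push_cast; ring
  have hiccm : ∀ i, 1 ≤ m i ∧ m i ≤ 2*(n:ℤ) := fun i => Finset.mem_Icc.mp (hicc i)
  -- Step A : consecutive gap lower bound
  have StepA : ∀ i j : Fin t, (i:ℕ) + 1 = (j:ℕ) → m i + d i + d j ≤ m j := by
    intro i j hij
    have hij' : i < j := by rw [Fin.lt_def]; omega
    apply gap_bound hn hcs hgen (hmono hij') (hcross i) (hcross j)
    · intro x hx1 hx2
      have b1 := (hiccm i).1
      have b2 := (hiccm j).2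
      apply honly x (Finset.mem_Icc.mpr ⟨by omega, by omega⟩)
      intro k hk
      rcases le_or_gt (k:ℕ) (i:ℕ) with h | h
      · have : m k ≤ m i := hmono.monotone (by rw [Fin.le_def]; omega)
        omega
      · have : m j ≤ m k := hmono.monotone (by rw [Fin.le_def]; omega)
        omega
    · intro p h1 h2 h3 h4
      have f1 : Flips A (m i) p (conj p) := block_flips hn hcs (hcross i) (by omega) h2
      have f2 : Flips A (m j) p (conj p) := block_flips hn hcs (hcross j) h3 (by omega)
      have hne : p ≠ conj p := (conj_ne hn hcs p).symm
      obtain ⟨i0, _, huniq⟩ := A.flip_once p (conj p) hne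
      have e1 : m i = i0 := huniq (m i) ⟨by rw [hh]; exact hicc i, f1⟩
      have e2 : m j = i0 := huniq (m j) ⟨by rw [hh]; exact hicc j, f2⟩
      have : i = j := hmono.injective (e1.trans e2.symm)
      rw [this] at hij; omega
  -- C-step
  have Cstep : ∀ i j : Fin t, (i:ℕ) + 1 = (j:ℕ) → C j = C i + d i + d j := by
    intro i j hij
    have hj0 : (j:ℕ) ≠ 0 := by omega
    by_cases hi0 : (i:ℕ) = 0
    · have hiz : i = z := Fin.ext (by omega)
      have hIooj : Finset.Ioo z j = ∅ := by
        ext x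
        simp only [Finset.mem_Ioo, Finset.notMem_empty, iff_false, not_and, Fin.lt_def]
        intro h1
        omega
      subst hiz
      simp only [hC, hi0, hj0, if_pos rfl, if_true, if_neg hj0, hIooj, Finset.sum_empty]
      ring
    · have hIoo : Finset.Ioo z j = insert i (Finset.Ioo z i) := by
        ext x
        simp only [Finset.mem_Ioo, Finset.mem_insert, Fin.lt_def, Fin.ext_iff]
        omega
      have hnm : i ∉ Finset.Ioo z i := by
        simp [Finset.mem_Ioo]
      simp only [hC, if_neg hi0, if_neg hj0, hIoo, Finset.sum_insert hnm]
      ring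
  -- base value
  have Cz : C z = 0 := by simp [hC, hz]
  -- lower bound by induction
  have lower : ∀ k : ℕ, ∀ i : Fin t, (i:ℕ) = k → C i + 1 ≤ m i := by
    intro k
    induction k with
    | zero =>
      intro i hi
      have hiz : i = z := Fin.ext (by omega)
      rw [hiz, Cz, hfirst]
      omega
    | succ k ih =>
      intro j hj
      have hkt : k < t := by omega
      have hA := StepA ⟨k, hkt⟩ j (by simpa using hj.symm)
      have hC' := Cstep ⟨k, hkt⟩ j (by simpa using hj.symm)
      have hI := ih ⟨k, hkt⟩ rfl
      omega
  rcases Nat.lt_or_ge t 2 with ht2 | ht2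
  · -- t = 1
    have ht1 : t = 1 := by omega
    constructor
    · intro i
      have hi0 : (i:ℕ) = 0 := by have := i.isLt; omega
      have hiz : i = z := Fin.ext (by omega)
      rw [hiz, hfirst, if_pos hzv]
      norm_num
    · intro i j hij
      have := i.isLt
      have := j.isLt
      omega
  · -- t ≥ 2
    set last : Fin t := ⟨t-1, by omega⟩ with hlast
    have hlv : (last:ℕ) = t - 1 := rfl
    have hzne : (z:ℕ) ≠ (last:ℕ) := by omega
    -- sum split
    have husplit : (Finset.univ : Finset (Fin t)) = insert z (insert last (Finset.Ioo z last)) := by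
      ext x
      simp only [Finset.mem_univ, true_iff, Finset.mem_insert, Finset.mem_Ioo, Fin.lt_def,
        Fin.ext_iff]
      have := x.isLt
      omega
    have hzni : z ∉ insert last (Finset.Ioo z last) := by
      simp only [Finset.mem_insert, Finset.mem_Ioo, Fin.lt_def, Fin.ext_iff, not_or, not_and]
      omega
    have hlni : last ∉ Finset.Ioo z last := by
      simp [Finset.mem_Ioo]
    have hsum2 : (d z : ℤ) + ((d last : ℤ) + ∑ j ∈ Finset.Ioo z last, (d j : ℤ)) = n := by
      have hu : ∑ i : Fin t, (d i : ℤ)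
          = ∑ i ∈ insert z (insert last (Finset.Ioo z last)), (d i : ℤ) := by
        rw [← husplit]
      rw [Finset.sum_insert hzni, Finset.sum_insert hlni] at hu
      rw [← hu]
      exact hdsum
    have Clast : C last = 2*(n:ℤ) - d z - d last := by
      have hl0 : (last:ℕ) ≠ 0 := by omega
      simp only [hC, if_neg hl0]
      linarith
    -- Step B : wraparound
    have hcb : CrossingAt n A (1 + 2*(n:ℤ)) (d z) := by
      have := cross_period hn henc hgen (hcross z)
      rwa [hfirst] at this
    have StepB : m last + d last + d z ≤ 1 + 2*(n:ℤ) := by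
      apply gap_bound hn hcs hgen (by have := (hiccm last).2; omega) (hcross last) hcb
      · intro x hx1 hx2
        have b1 := (hiccm last).1
        apply honly x (Finset.mem_Icc.mpr ⟨by omega, by omega⟩)
        intro k hk
        have : m k ≤ m last := hmono.monotone (by rw [Fin.le_def]; have := k.isLt; omega)
        omega
      · intro p h1 h2 h3 h4
        have f1 : Flips A (m last) p (conj p) := block_flips hn hcs (hcross last) (by omega) h2
        have f2 : Flips A (1 + 2*(n:ℤ)) p (conj p) := block_flips hn hcs hcb h3 (by omega)
        have hne : p ≠ conj p := (conj_ne hn hcs p).symm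
        rw [flips_period hn henc 1 p (conj p) hne] at f2
        obtain ⟨i0, _, huniq⟩ := A.flip_once p (conj p) hne
        have e1 : m last = i0 := huniq (m last) ⟨by rw [hh]; exact hicc last, f1⟩
        have e2 : m z = i0 := by
          apply huniq
          rw [hfirst]
          exact ⟨by rw [hh]; refine Finset.mem_Icc.mpr ⟨le_refl _, by omega⟩, f2⟩
        have : last = z := hmono.injective (e1.trans e2.symm)
        rw [Fin.ext_iff] at this
        exact absurd this.symm hzne
    -- upper bound by downward induction
    have upper : ∀ k : ℕ, ∀ i : Fin t, (i:ℕ) + k = t - 1 → m i ≤ C i + 1 := by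
      intro k
      induction k with
      | zero =>
        intro i hi
        have hil : i = last := Fin.ext (by omega)
        rw [hil, Clast]
        omega
      | succ k ih =>
        intro i hi
        have hjt : (i:ℕ) + 1 < t := by omega
        have hA := StepA i ⟨(i:ℕ)+1, hjt⟩ (by simp)
        have hC' := Cstep i ⟨(i:ℕ)+1, hjt⟩ (by simp)
        have hI := ih ⟨(i:ℕ)+1, hjt⟩ (by simp; omega)
        omega
    have hmC : ∀ i : Fin t, m i = C i + 1 := by
      intro i
      have h1 := lower (i:ℕ) i rfl
      have h2 := upper (t - 1 - (i:ℕ)) i (by have := i.isLt; omega)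
      omega
    constructor
    · intro i
      have := hmC i
      simpa only [hC] using this
    · intro i j hij
      rw [hmC i, hmC j, Cstep i j hij]
      ring
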